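/- Let f : [-1,1] → [-1,1] be a piecewise-linear map with f(0) = 0 such that f restricted to [0,1] and to [-1,0] are both non-constant, and let t_f be its radial contour factor. If ⟨x₁,x₂⟩ is a radial departure of f, then there exists a radial departure ⟨y₁,y₂⟩ of t_f such that for every continuous map s : [-1,1] → [-1,1] with s(0) = 0 and f = t_f ∘ s: ⟨x₁,x₂⟩ is a positive radial departure of s, and s(x₁) = y₁, s(x₂) = y₂. -/
import Mathlib


open Set
open Topology Filter

set_option linter.unusedVariables false

/-- A positive radial departure of `f`. -/
def PosRD (f : ℝ → ℝ) (x₁ x₂ : ℝ) : Prop :=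
  -1 ≤ x₁ ∧ x₁ < 0 ∧ 0 < x₂ ∧ x₂ ≤ 1 ∧ f '' Ioo x₁ x₂ = Ioo (f x₁) (f x₂)

/-- A negative radial departure of `f`. -/
def NegRD (f : ℝ → ℝ) (x₁ x₂ : ℝ) : Prop :=
  -1 ≤ x₁ ∧ x₁ < 0 ∧ 0 < x₂ ∧ x₂ ≤ 1 ∧ f '' Ioo x₁ x₂ = Ioo (f x₂) (f x₁)

/-- A radial departure of `f` (of either orientation). -/
def RadialDeparture (f : ℝ → ℝ) (x₁ x₂ : ℝ) : Prop := PosRD f x₁ x₂ ∨ NegRD f x₁ x₂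

/-- A (right) departure of `g` (viewed as a map on `[0,1]`). -/
def Departure (g : ℝ → ℝ) (x : ℝ) : Prop := 0 < x ∧ x ≤ 1 ∧ g x ∉ g '' Ico 0 x

/-- A left departure of `g` (viewed as a map on `[-1,0]`). -/
def LeftDeparture (g : ℝ → ℝ) (x : ℝ) : Prop := -1 ≤ x ∧ x < 0 ∧ g x ∉ g '' Ioc x 0

/-- A (right) contour point of `g`: a departure `α` such that every departure past `α`
is preceded (within `(α, x]`) by a departure of orientation opposite to that of `α`. -/
def ContourPoint (g : ℝ → ℝ) (α : ℝ) : Prop :=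
  Departure g α ∧
    ∀ x, Departure g x → α < x → ∃ y, Departure g y ∧ α < y ∧ y ≤ x ∧ g α * g y < 0

/-- `[ym, yp]` is a liftable range for `t`. -/
def LiftableRange (t : ℝ → ℝ) (ym yp : ℝ) : Prop :=
  -1 ≤ ym ∧ ym ≤ 0 ∧ 0 ≤ yp ∧ yp ≤ 1 ∧
  t '' Icc ym 0 ⊆ t '' Icc 0 1 ∧
  ¬ ∃ y₁ y₂, RadialDeparture t y₁ y₂ ∧ ym ≤ y₁ ∧ yp < y₂

/-- `f` is linear (affine) on the interval `[a,b]`. -/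
def LinearOn (f : ℝ → ℝ) (a b : ℝ) : Prop :=
  ∀ x ∈ Icc a b, (b - a) * f x = (b - x) * f a + (x - a) * f b

/-- `f` is piecewise-linear on `[-1,1]`. -/
def PiecewiseLinear (f : ℝ → ℝ) : Prop :=
  ∃ n : ℕ, ∃ c : ℕ → ℝ, c 0 = -1 ∧ c n = 1 ∧ (∀ i < n, c i < c (i + 1)) ∧
    ∀ i < n, LinearOn f (c i) (c (i + 1))

/-- `t` is the contour factor of `g` (for maps on `[0,1]`): the contour points of `g`
are `0 = α₀ < α₁ < ⋯ < α_n`, `t (i/n) = g (α i)`, and `t` is linear in between. -/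
def IsContourFactor (g t : ℝ → ℝ) : Prop :=
  ∃ n : ℕ, 0 < n ∧ ∃ α : ℕ → ℝ, α 0 = 0 ∧ (∀ i < n, α i < α (i + 1)) ∧
    (∀ x, ContourPoint g x ↔ ∃ i, 1 ≤ i ∧ i ≤ n ∧ x = α i) ∧
    (∀ i ≤ n, t ((i : ℝ) / (n : ℝ)) = g (α i)) ∧
    (∀ i < n, LinearOn t ((i : ℝ) / (n : ℝ)) (((i : ℝ) + 1) / (n : ℝ)))

/-- `t` is the radial contour factor of `f`: its restriction to `[0,1]` is the contour
factor of `f|[0,1]`, and `t|[-1,0] ∘ r` is the contour factor of `f|[-1,0] ∘ r`,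
where `r x = -x`. -/
def IsRadialContourFactor (f t : ℝ → ℝ) : Prop :=
  IsContourFactor f t ∧ IsContourFactor (fun x => f (-x)) (fun x => t (-x))

/-- `f` is non-constant on each of `[0,1]` and `[-1,0]`. -/
def NonConstSides (f : ℝ → ℝ) : Prop :=
  (∃ a ∈ Icc (0:ℝ) 1, ∃ b ∈ Icc (0:ℝ) 1, f a ≠ f b) ∧
  (∃ a ∈ Icc (-1:ℝ) 0, ∃ b ∈ Icc (-1:ℝ) 0, f a ≠ f b)

lemma linearOn_continuousOn {f : ℝ → ℝ} {a b : ℝ} (h : LinearOn f a b) (hab : a < b) :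
    ContinuousOn f (Icc a b) := by
  have hba : b - a ≠ 0 := by linarith
  have heq : ∀ x ∈ Icc a b, f x = ((b - x) * f a + (x - a) * f b) / (b - a) := by
    intro x hx
    rw [eq_div_iff hba]
    linarith [h x hx]
  have hc : ContinuousOn (fun x => ((b - x) * f a + (x - a) * f b) / (b - a)) (Icc a b) :=
    (Continuous.continuousOn (by continuity))
  exact hc.congr heq

lemma continuousOn_union_closed {f : ℝ → ℝ} {s t : Set ℝ} (hs : IsClosed s) (ht : IsClosed t)
    (hfs : ContinuousOn f s) (hft : ContinuousOn f t) : ContinuousOn f (s ∪ t) := by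
  intro x hx
  have h1 : ContinuousWithinAt f s x := by
    by_cases h : x ∈ s
    · exact hfs x h
    · exact continuousWithinAt_of_notMem_closure (by rwa [hs.closure_eq])
  have h2 : ContinuousWithinAt f t x := by
    by_cases h : x ∈ t
    · exact hft x h
    · exact continuousWithinAt_of_notMem_closure (by rwa [ht.closure_eq])
  exact h1.union h2

lemma chain_mono {c : ℕ → ℝ} {n : ℕ} (h : ∀ k < n, c k < c (k + 1)) :
    ∀ i j, i ≤ j → j ≤ n → c i ≤ c j := by
  intro i j hij hjn
  induction j with
  | zero => simp [Nat.le_zero.mp hij]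
  | succ j ih =>
      rcases Nat.lt_or_ge i (j + 1) with hc | hc
      · exact le_trans (ih (by omega) (by omega)) (h j (by omega)).le
      · have : i = j + 1 := by omega
        simp [this]

lemma pieces_continuousOn {f : ℝ → ℝ} {c : ℕ → ℝ} :
    ∀ n : ℕ, (∀ i < n, c i < c (i + 1)) → (∀ i < n, LinearOn f (c i) (c (i + 1))) →
    ContinuousOn f (Icc (c 0) (c n)) := by
  intro n
  induction n with
  | zero => intro _ _; rw [Icc_self]; exact continuousOn_singleton f _
  | succ n ih =>
      intro hm hl
      have h1 := ih (fun i hi => hm i (by omega)) (fun i hi => hl i (by omega))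
      have h2 := linearOn_continuousOn (hl n (by omega)) (hm n (by omega))
      have hc0n : c 0 ≤ c n := chain_mono (fun k hk => hm k (by omega)) 0 n (by omega) le_rfl
      rw [← Icc_union_Icc_eq_Icc hc0n (hm n (by omega)).le]
      exact continuousOn_union_closed isClosed_Icc isClosed_Icc h1 h2

lemma chain_lt {c : ℕ → ℝ} {n : ℕ} (h : ∀ k < n, c k < c (k + 1)) :
    ∀ i j, i < j → j ≤ n → c i < c j := by
  intro i j hij hjn
  calc c i < c (i + 1) := h i (by omega)
    _ ≤ c j := chain_mono h (i + 1) j (by omega) hjn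

lemma departure_neg_iff {g : ℝ → ℝ} {x : ℝ} :
    Departure (fun y => -g y) x ↔ Departure g x := by
  constructor
  · rintro ⟨h1, h2, h3⟩
    refine ⟨h1, h2, ?_⟩
    rintro ⟨v, hv, hgv⟩
    exact h3 ⟨v, hv, by simp [hgv]⟩
  · rintro ⟨h1, h2, h3⟩
    refine ⟨h1, h2, ?_⟩
    rintro ⟨v, hv, hgv⟩
    simp only [neg_inj] at hgv
    exact h3 ⟨v, hv, hgv⟩

lemma contourPoint_neg_iff {g : ℝ → ℝ} {x : ℝ} :
    ContourPoint (fun y => -g y) x ↔ ContourPoint g x := by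
  constructor
  · rintro ⟨h1, h2⟩
    refine ⟨departure_neg_iff.mp h1, fun z hz hxz => ?_⟩
    obtain ⟨y, hy, ha, hb, hc⟩ := h2 z (departure_neg_iff.mpr hz) hxz
    exact ⟨y, departure_neg_iff.mp hy, ha, hb, by simpa [neg_mul_neg] using hc⟩
  · rintro ⟨h1, h2⟩
    refine ⟨departure_neg_iff.mpr h1, fun z hz hxz => ?_⟩
    obtain ⟨y, hy, ha, hb, hc⟩ := h2 z (departure_neg_iff.mp hz) hxz
    exact ⟨y, departure_neg_iff.mpr hy, ha, hb, by simpa [neg_mul_neg] using hc⟩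

lemma isContourFactor_neg {g τ : ℝ → ℝ} (h : IsContourFactor g τ) :
    IsContourFactor (fun y => -g y) (fun y => -τ y) := by
  obtain ⟨n, hn, α, h0, hinc, hctr, hnode, hlin⟩ := h
  refine ⟨n, hn, α, h0, hinc, fun x => contourPoint_neg_iff.trans (hctr x),
    fun i hi => by simp [hnode i hi], fun i hi x hx => ?_⟩
  have := hlin i hi x hx
  ring_nf
  ring_nf at this
  linarith

lemma lim_mem_Icc_right {h : ℝ → ℝ} {c d A B : ℝ} (hcd : c < d)
    (hcont : ContinuousWithinAt h (Ico c d) d)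
    (hin : ∀ x, c ≤ x → x < d → h x ∈ Ioo A B) : h d ∈ Icc A B := by
  haveI ne : (𝓝[Ico c d] d).NeBot := right_nhdsWithin_Ico_neBot hcd
  refine isClosed_Icc.mem_of_tendsto hcont ?_
  filter_upwards [self_mem_nhdsWithin] with x hx
  exact Ioo_subset_Icc_self (hin x hx.1 hx.2)

lemma lim_mem_Icc_left {h : ℝ → ℝ} {c d A B : ℝ} (hcd : c < d)
    (hcont : ContinuousWithinAt h (Ioc c d) c)
    (hin : ∀ x, c < x → x ≤ d → h x ∈ Ioo A B) : h c ∈ Icc A B := by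
  haveI ne : (𝓝[Ioc c d] c).NeBot := left_nhdsWithin_Ioc_neBot hcd
  refine isClosed_Icc.mem_of_tendsto hcont ?_
  filter_upwards [self_mem_nhdsWithin] with x hx
  exact Ioo_subset_Icc_self (hin x hx.1 hx.2)

lemma linearOn_bound {τ : ℝ → ℝ} {a b : ℝ} (h : LinearOn τ a b) (hab : a < b) {x : ℝ}
    (hx : x ∈ Icc a b) : min (τ a) (τ b) ≤ τ x ∧ τ x ≤ max (τ a) (τ b) := by
  have he := h x hx
  obtain ⟨h1, h2⟩ := hx
  constructor
  · rcases le_total (τ a) (τ b) with hc | hc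
    · rw [min_eq_left hc]
      nlinarith [mul_nonneg (sub_nonneg.mpr h1) (sub_nonneg.mpr hc)]
    · rw [min_eq_right hc]
      nlinarith [mul_nonneg (sub_nonneg.mpr h2) (sub_nonneg.mpr hc)]
  · rcases le_total (τ a) (τ b) with hc | hc
    · rw [max_eq_right hc]
      nlinarith [mul_nonneg (sub_nonneg.mpr h2) (sub_nonneg.mpr hc)]
    · rw [max_eq_left hc]
      nlinarith [mul_nonneg (sub_nonneg.mpr h1) (sub_nonneg.mpr hc)]

lemma linearOn_strictMono {τ : ℝ → ℝ} {a b : ℝ} (h : LinearOn τ a b) (hab : a < b)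
    (hv : τ a < τ b) {u v : ℝ} (hu : a ≤ u) (huv : u < v) (hvb : v ≤ b) : τ u < τ v := by
  have h1 := h u ⟨hu, by linarith⟩
  have h2 := h v ⟨by linarith, hvb⟩
  nlinarith [mul_pos (sub_pos.mpr huv) (sub_pos.mpr hv)]

lemma fmc {g : ℝ → ℝ} (hgc : ContinuousOn g (Icc 0 1)) (hg0 : g 0 = 0)
    {e B : ℝ} (he0 : 0 < e) (he1 : e ≤ 1) (hB : 0 < B)
    (hatt : ∃ z, 0 ≤ z ∧ z ≤ e ∧ B ≤ g z)
    (hbey : ∀ x, Departure g x → e < x → ∃ y, Departure g y ∧ e ≤ y ∧ y ≤ x ∧ g y < 0) :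
    ∃ w, ContourPoint g w ∧ 0 < w ∧ w ≤ e ∧ B ≤ g w := by
  obtain ⟨z, hz0, hze, hzB⟩ := hatt
  have hsub : Icc (0:ℝ) e ⊆ Icc 0 1 := Icc_subset_Icc le_rfl he1
  obtain ⟨x₀, hx₀, hmax⟩ :=
    isCompact_Icc.exists_isMaxOn ⟨0, le_rfl, he0.le⟩ (hgc.mono hsub)
  set M := g x₀ with hM
  have hBM : B ≤ M := le_trans hzB (hmax ⟨hz0, hze⟩)
  have hWc : IsClosed (Icc (0:ℝ) e ∩ g ⁻¹' {M}) :=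
    (hgc.mono hsub).preimage_isClosed_of_isClosed isClosed_Icc isClosed_singleton
  have hWbdd : BddBelow (Icc (0:ℝ) e ∩ g ⁻¹' {M}) := ⟨0, fun y hy => hy.1.1⟩
  have hwmem := hWc.csInf_mem ⟨x₀, hx₀, rfl⟩ hWbdd
  set w := sInf (Icc (0:ℝ) e ∩ g ⁻¹' {M}) with hw
  obtain ⟨⟨hw0, hwe⟩, hgw⟩ := hwmem
  simp only [mem_preimage, mem_singleton_iff] at hgw
  have hw0' : 0 < w := by
    rcases lt_or_eq_of_le hw0 with h | h
    · exact h
    · rw [← h] at hgw; rw [hg0] at hgw; linarith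
  have hwfirst : ∀ v, 0 ≤ v → v < w → g v ≠ M := by
    intro v h0 hvw hgv
    have : w ≤ v := csInf_le hWbdd ⟨⟨h0, le_trans hvw.le hwe⟩, hgv⟩
    linarith
  have hdep : Departure g w := by
    refine ⟨hw0', le_trans hwe he1, ?_⟩
    rintro ⟨v, ⟨hv0, hvw⟩, hgv⟩
    exact hwfirst v hv0 hvw (hgv.trans hgw)
  have hgwpos : 0 < g w := by rw [hgw]; linarith
  refine ⟨w, ⟨hdep, ?_⟩, hw0', hwe, by rw [hgw]; exact hBM⟩
  intro x hx hwx
  by_cases hxe : x ≤ e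
  · refine ⟨x, hx, hwx, le_rfl, ?_⟩
    have hgxneg : g x < 0 := by
      have hIcoSub : Ico (0:ℝ) x ⊆ Icc 0 1 :=
        (Ico_subset_Icc_self).trans ((Icc_subset_Icc le_rfl hxe).trans hsub)
      have himg : IsPreconnected (g '' Ico 0 x) :=
        isPreconnected_Ico.image g (hgc.mono hIcoSub)
      have hoc := himg.ordConnected
      have h0m : (0:ℝ) ∈ g '' Ico 0 x := ⟨0, ⟨le_rfl, hw0'.trans hwx⟩, hg0⟩
      have hMm : M ∈ g '' Ico 0 x := ⟨w, ⟨hw0, hwx⟩, hgw⟩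
      have hle : g x ≤ M := hmax ⟨(hw0'.trans hwx).le, hxe⟩
      by_contra hpos
      push_neg at hpos
      exact hx.2.2 (hoc.out h0m hMm ⟨hpos, hle⟩)
    exact mul_neg_of_pos_of_neg hgwpos hgxneg
  · obtain ⟨y, hyd, hey, hyx, hyneg⟩ := hbey x hx (not_le.mp hxe)
    have hwy : w < y := by
      rcases lt_or_eq_of_le (hwe.trans hey) with h | h
      · exact h
      · rw [← h] at hyneg; linarith
    exact ⟨y, hyd, hwy, hyx, mul_neg_of_pos_of_neg hgwpos hyneg⟩

lemma exit_lemma {g τ : ℝ → ℝ} (hg0 : g 0 = 0) (hgc : ContinuousOn g (Icc 0 1))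
    (hfac : IsContourFactor g τ)
    {A B e : ℝ} (hA : A < 0) (hB : 0 < B)
    (he0 : 0 < e) (he1 : e ≤ 1)
    (hin : ∀ u, 0 < u → u < e → A < g u ∧ g u < B)
    (hend : g e = B) :
    ∃ y, 0 < y ∧ y ≤ 1 ∧ τ y = B ∧ ∀ u, 0 < u → u < y → A < τ u ∧ τ u < B := by
  obtain ⟨n, hn, α, hα0, hinc, hctr, hnode, hlin⟩ := hfac
  have hctrP : ∀ i, 1 ≤ i → i ≤ n → ContourPoint g (α i) := fun i h1 h2 =>
    (hctr (α i)).mpr ⟨i, h1, h2, rfl⟩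
  have hdepP : ∀ i, 1 ≤ i → i ≤ n → Departure g (α i) := fun i h1 h2 => (hctrP i h1 h2).1
  have h1 : ∃ w, ContourPoint g w ∧ 0 < w ∧ w ≤ 1 ∧ B ≤ g w :=
    fmc hgc hg0 one_pos le_rfl hB ⟨e, he0.le, he1, hend.ge⟩
      (fun x hx h1x => absurd hx.2.1 (not_le.mpr h1x))
  obtain ⟨w₀, hw₀c, _, _, hw₀B⟩ := h1
  obtain ⟨q, hq1, hqn, hq⟩ := (hctr w₀).mp hw₀c
  classical
  have hP : ∃ i, 1 ≤ i ∧ i ≤ n ∧ ¬ (A < g (α i) ∧ g (α i) < B) := by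
    refine ⟨q, hq1, hqn, ?_⟩
    rw [← hq]
    push_neg
    intro _
    linarith
  have key : ∃ p : ℕ, p + 1 ≤ n ∧ (∀ k, k < p + 1 → (A < g (α k) ∧ g (α k) < B)) ∧
      B ≤ g (α (p + 1)) := by
    set i := Nat.find hP with hidef
    obtain ⟨hi1, hiN, hbad⟩ := Nat.find_spec hP
    have hmin : ∀ k, k < i → ¬ (1 ≤ k ∧ k ≤ n ∧ ¬ (A < g (α k) ∧ g (α k) < B)) :=
      fun k hk => Nat.find_min hP hk
    have hgood0 : ∀ k, k < i → A < g (α k) ∧ g (α k) < B := by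
      intro k hki
      rcases Nat.eq_zero_or_pos k with rfl | hk
      · rw [hα0, hg0]; exact ⟨hA, hB⟩
      · by_contra hc
        exact hmin k hki ⟨hk, by omega, hc⟩
    have hBi : B ≤ g (α i) := by
      by_contra hc
      push_neg at hc
      have hAi : g (α i) ≤ A := by
        by_contra hc2; push_neg at hc2; exact hbad ⟨hc2, hc⟩
      have hαi0 : 0 < α i := (hdepP i hi1 hiN).1
      have hαi1 : α i ≤ 1 := (hdepP i hi1 hiN).2.1
      have heαi : e ≤ α i := by
        by_contra hc3
        push_neg at hc3
        have := (hin (α i) hαi0 hc3).1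
        linarith
      obtain ⟨w, hwc, hw0, hwe, hwB⟩ := fmc hgc hg0 hαi0 hαi1 hB ⟨e, he0.le, heαi, hend.ge⟩
        (fun x hx hαx => ⟨α i, hdepP i hi1 hiN, le_rfl, hαx.le, by linarith⟩)
      obtain ⟨k, hk1, hkn, hkw⟩ := (hctr w).mp hwc
      have hki : k < i := by
        by_contra hc4
        push_neg at hc4
        rcases lt_or_eq_of_le hc4 with h | h
        · have := chain_lt hinc i k h hkn
          rw [← hkw] at this
          linarith
        · rw [← h] at hkw
          rw [hkw] at hwB
          linarith
      have := (hgood0 k hki).2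
      rw [← hkw] at this
      linarith
    refine ⟨i - 1, by omega, ?_, ?_⟩
    · have hi' : i - 1 + 1 = i := by omega
      rw [hi']
      exact hgood0
    · have hi' : i - 1 + 1 = i := by omega
      rw [hi']
      exact hBi
  obtain ⟨p, hpn, hgood, hBp⟩ := key
  have hnpos : (0:ℝ) < (n:ℝ) := by exact_mod_cast hn
  have ht0 : τ 0 = 0 := by
    have := hnode 0 (by omega)
    simpa [hα0, hg0] using this
  have hseg : ∀ k, k ≤ p → ∀ u, 0 ≤ u → u ≤ (k:ℝ)/(n:ℝ) → A < τ u ∧ τ u < B := by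
    intro k hk
    induction k with
    | zero =>
        intro u h0 h1
        have hu : u = 0 := le_antisymm (by simpa using h1) h0
        rw [hu, ht0]
        exact ⟨hA, hB⟩
    | succ k ihk =>
        intro u h0 h1
        rcases le_or_gt u ((k:ℝ)/(n:ℝ)) with hc | hc
        · exact ihk (by omega) u h0 hc
        · have hkn' : k < n := by omega
          have hlink := hlin k hkn'
          have hklt : (k:ℝ)/(n:ℝ) < ((k:ℝ)+1)/(n:ℝ) :=
            (div_lt_div_iff_of_pos_right hnpos).mpr (by linarith)
          have h1' : u ≤ ((k:ℝ)+1)/(n:ℝ) := by push_cast at h1; linarith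
          have hbound := linearOn_bound hlink hklt ⟨hc.le, h1'⟩
          have hvk : τ ((k:ℝ)/(n:ℝ)) = g (α k) := hnode k (by omega)
          have hvk1 : τ (((k:ℝ)+1)/(n:ℝ)) = g (α (k+1)) := by
            have := hnode (k+1) (by omega)
            push_cast at this
            exact this
          have hk_in := hgood k (by omega)
          have hk1_in := hgood (k+1) (by omega)
          rw [hvk, hvk1] at hbound
          constructor
          · calc A < min (g (α k)) (g (α (k+1))) := lt_min hk_in.1 hk1_in.1
              _ ≤ τ u := hbound.1
          · calc τ u ≤ max (g (α k)) (g (α (k+1))) := hbound.2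
              _ < B := max_lt hk_in.2 hk1_in.2
  -- the branch p+1
  have hpn' : p < n := by omega
  have hcd : (p:ℝ)/(n:ℝ) < ((p:ℝ)+1)/(n:ℝ) := (div_lt_div_iff_of_pos_right hnpos).mpr (by linarith)
  have hτc : τ ((p:ℝ)/(n:ℝ)) = g (α p) := hnode p (by omega)
  have hτd : τ (((p:ℝ)+1)/(n:ℝ)) = g (α (p+1)) := by
    have := hnode (p+1) (by omega)
    push_cast at this
    exact this
  have hcIoo : A < τ ((p:ℝ)/(n:ℝ)) ∧ τ ((p:ℝ)/(n:ℝ)) < B := by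
    rw [hτc]; exact hgood p (by omega)
  have hdB : B ≤ τ (((p:ℝ)+1)/(n:ℝ)) := by rw [hτd]; exact hBp
  have hlinb := hlin p hpn'
  have hcont := linearOn_continuousOn hlinb hcd
  obtain ⟨y, hyIcc, hτy⟩ := intermediate_value_Icc hcd.le hcont ⟨hcIoo.2.le, hdB⟩
  have hcy : (p:ℝ)/(n:ℝ) < y := by
    rcases lt_or_eq_of_le hyIcc.1 with h | h
    · exact h
    · rw [← h] at hτy; linarith [hcIoo.2]
  refine ⟨y, ?_, ?_, hτy, ?_⟩
  · have : (0:ℝ) ≤ (p:ℝ)/(n:ℝ) := div_nonneg (Nat.cast_nonneg p) hnpos.le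
    linarith
  · have hd1 : ((p:ℝ)+1)/(n:ℝ) ≤ 1 := by
      rw [div_le_one hnpos]
      exact_mod_cast hpn
    linarith [hyIcc.2]
  · intro u hu0 huy
    rcases le_or_gt u ((p:ℝ)/(n:ℝ)) with hc2 | hc2
    · exact hseg p le_rfl u hu0.le hc2
    · have hτcd : τ ((p:ℝ)/(n:ℝ)) < τ (((p:ℝ)+1)/(n:ℝ)) := by linarith [hcIoo.2]
      have hud : u ≤ ((p:ℝ)+1)/(n:ℝ) := le_trans huy.le hyIcc.2
      have h1 : τ u < τ y := linearOn_strictMono hlinb hcd hτcd hc2.le huy hyIcc.2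
      have h2 : τ ((p:ℝ)/(n:ℝ)) < τ u := linearOn_strictMono hlinb hcd hτcd le_rfl hc2 hud
      exact ⟨by linarith [hcIoo.1], by linarith [hτy ▸ h1]⟩


lemma isContourFactor_zero {g τ : ℝ → ℝ} (h : IsContourFactor g τ) (hg0 : g 0 = 0) :
    τ 0 = 0 := by
  obtain ⟨n, hn, α, hα0, _, _, hnode, _⟩ := h
  have := hnode 0 (by omega)
  simpa [hα0, hg0] using this

lemma isContourFactor_continuousOn {g τ : ℝ → ℝ} (h : IsContourFactor g τ) :
    ContinuousOn τ (Icc 0 1) := by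
  obtain ⟨n, hn, α, _, _, _, _, hlin⟩ := h
  have hnpos : (0:ℝ) < (n:ℝ) := by exact_mod_cast hn
  have h1 := pieces_continuousOn (f := τ) (c := fun i => (i:ℝ)/(n:ℝ)) n
    (fun i _ => by
      push_cast
      exact (div_lt_div_iff_of_pos_right hnpos).mpr (by linarith))
    (fun i hi => by
      have := hlin i hi
      convert this using 2
      push_cast
      ring)
  have hc0 : ((0:ℕ):ℝ)/(n:ℝ) = 0 := by simp
  have hcn : ((n:ℕ):ℝ)/(n:ℝ) = 1 := by
    field_simp
  simpa [hc0, hcn] using h1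

lemma main_pos {f t : ℝ → ℝ} (hfc : ContinuousOn f (Icc (-1) 1)) (hf0 : f 0 = 0)
    (htR : IsContourFactor f t)
    (htL : IsContourFactor (fun x => f (-x)) (fun x => t (-x)))
    {x₁ x₂ : ℝ} (hpos : PosRD f x₁ x₂) :
    ∃ y₁ y₂, RadialDeparture t y₁ y₂ ∧
      ∀ s : ℝ → ℝ, Continuous s → s 0 = 0 → f = t ∘ s →
        PosRD s x₁ x₂ ∧ s x₁ = y₁ ∧ s x₂ = y₂ := by
  obtain ⟨hx₁m, hx₁0, hx₂0, hx₂1, himg⟩ := hpos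
  have h0mem : (0:ℝ) ∈ Ioo x₁ x₂ := ⟨hx₁0, hx₂0⟩
  have h0img : f 0 ∈ Ioo (f x₁) (f x₂) := himg ▸ mem_image_of_mem f h0mem
  rw [hf0] at h0img
  obtain ⟨hF₁, hF₂⟩ := h0img
  have hfIoo : ∀ u, u ∈ Ioo x₁ x₂ → f u ∈ Ioo (f x₁) (f x₂) := fun u hu =>
    himg ▸ mem_image_of_mem f hu
  have hsubR : Icc (0:ℝ) 1 ⊆ Icc (-1) 1 := Icc_subset_Icc (by norm_num) le_rfl
  obtain ⟨y₂, hy₂0, hy₂1, hty₂, hy₂in⟩ :=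
    exit_lemma hf0 (hfc.mono hsubR) htR hF₁ hF₂ hx₂0 hx₂1
      (fun u hu0 hue =>
        have h := hfIoo u ⟨lt_trans hx₁0 hu0, hue⟩
        ⟨h.1, h.2⟩) rfl
  have hgL0 : (fun u => -f (-u)) 0 = 0 := by simp [hf0]
  have hcL : ContinuousOn (fun u => -f (-u)) (Icc 0 1) := by
    apply ContinuousOn.neg
    apply ContinuousOn.comp hfc continuous_neg.continuousOn
    intro u hu
    simp only [mem_Icc] at hu
    constructor
    · show (-1:ℝ) ≤ -u
      linarith [hu.2]
    · show -u ≤ (1:ℝ)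
      linarith [hu.1]
  obtain ⟨z, hz0, hz1, htz, hzin⟩ :=
    exit_lemma (g := fun u => -f (-u)) (τ := fun u => -t (-u)) hgL0 hcL
      (isContourFactor_neg htL) (A := -(f x₂)) (B := -(f x₁)) (by linarith) (by linarith)
      (e := -x₁) (by linarith) (by linarith)
      (fun u hu0 hue => by
        have h := hfIoo (-u) ⟨by linarith, by linarith⟩
        exact ⟨by simpa using neg_lt_neg h.2, by simpa using neg_lt_neg h.1⟩)
      (by simp)
  have hty₁ : t (-z) = f x₁ := by
    have : -t (-z) = -(f x₁) := htz
    linarith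
  have hy₁in : ∀ u, -z < u → u < 0 → f x₁ < t u ∧ t u < f x₂ := by
    intro u hu1 hu0
    have h := hzin (-u) (by linarith) (by linarith)
    simp only [neg_neg] at h
    exact ⟨by linarith [h.2], by linarith [h.1]⟩
  have ht0 : t 0 = 0 := isContourFactor_zero htR hf0
  have tIoo : ∀ u, -z < u → u < y₂ → f x₁ < t u ∧ t u < f x₂ := by
    intro u h1 h2
    rcases lt_trichotomy u 0 with h | h | h
    · exact hy₁in u h1 h
    · rw [h, ht0]; exact ⟨hF₁, hF₂⟩
    · exact hy₂in u h h2
  have hy₁0 : -z < 0 := by linarith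
  have hy₁m : (-1:ℝ) ≤ -z := by linarith
  have tcontR : ContinuousOn t (Icc 0 1) := isContourFactor_continuousOn htR
  have tcontL : ContinuousOn (fun x => t (-x)) (Icc 0 1) := isContourFactor_continuousOn htL
  have hIooEq : Ioo (t (-z)) (t y₂) = Ioo (f x₁) (f x₂) := by rw [hty₁, hty₂]
  have hRD : PosRD t (-z) y₂ := by
    refine ⟨hy₁m, hy₁0, hy₂0, hy₂1, ?_⟩
    rw [hIooEq]
    apply Subset.antisymm
    · rintro v ⟨u, hu, rfl⟩
      exact tIoo u hu.1 hu.2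
    · intro v hv
      rcases le_or_gt 0 v with hc | hc
      · have hIccsub : Icc (0:ℝ) y₂ ⊆ Icc 0 1 := Icc_subset_Icc le_rfl hy₂1
        obtain ⟨u, huIcc, htu⟩ := intermediate_value_Icc hy₂0.le (tcontR.mono hIccsub)
          (show v ∈ Icc (t 0) (t y₂) from ⟨by rwa [ht0], by rw [hty₂]; exact hv.2.le⟩)
        refine ⟨u, ⟨lt_of_lt_of_le hy₁0 huIcc.1, ?_⟩, htu⟩
        rcases lt_or_eq_of_le huIcc.2 with h | h
        · exact h
        · exfalso; rw [h, hty₂] at htu; rw [← htu] at hv; exact lt_irrefl _ hv.2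
      · have hIccsub : Icc (0:ℝ) z ⊆ Icc 0 1 := Icc_subset_Icc le_rfl hz1
        obtain ⟨u, huIcc, htu⟩ := intermediate_value_Icc' hz0.le (tcontL.mono hIccsub)
          (show v ∈ Icc (t (-z)) (t (-0)) from
            ⟨by rw [hty₁]; exact hv.1.le, by rw [neg_zero, ht0]; exact hc.le⟩)
        have htu' : t (-u) = v := htu
        refine ⟨-u, ⟨?_, lt_of_le_of_lt (by linarith [huIcc.1] : -u ≤ 0) hy₂0⟩, htu'⟩
        rcases lt_or_eq_of_le huIcc.2 with h | h
        · linarith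
        · exfalso; rw [h, hty₁] at htu'; rw [← htu'] at hv; exact lt_irrefl _ hv.1
  refine ⟨-z, y₂, Or.inl hRD, ?_⟩
  intro s hs hs0 hfs
  have hts : ∀ x, t (s x) = f x := fun x => (congrFun hfs x).symm
  -- right-side exit analysis for s
  have hSclosed : IsClosed {x | x ∈ Icc (0:ℝ) x₂ ∧ s x ∉ Ioo (-z) y₂} := by
    have : {x | x ∈ Icc (0:ℝ) x₂ ∧ s x ∉ Ioo (-z) y₂} = Icc 0 x₂ ∩ s ⁻¹' (Ioo (-z) y₂)ᶜ := rfl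
    rw [this]
    exact isClosed_Icc.inter (isOpen_Ioo.isClosed_compl.preimage hs)
  have hx₂S : x₂ ∈ {x | x ∈ Icc (0:ℝ) x₂ ∧ s x ∉ Ioo (-z) y₂} := by
    refine ⟨⟨hx₂0.le, le_rfl⟩, fun hmem => ?_⟩
    have h := tIoo (s x₂) hmem.1 hmem.2
    rw [hts x₂] at h
    exact lt_irrefl _ h.2
  have hSbdd : BddBelow {x | x ∈ Icc (0:ℝ) x₂ ∧ s x ∉ Ioo (-z) y₂} := ⟨0, fun y hy => hy.1.1⟩
  obtain ⟨⟨hτ00, hτ0x₂⟩, hτ0out⟩ := hSclosed.csInf_mem ⟨x₂, hx₂S⟩ hSbdd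
  set τ₀ := sInf {x | x ∈ Icc (0:ℝ) x₂ ∧ s x ∉ Ioo (-z) y₂} with hτ₀def
  have hτ0pos : 0 < τ₀ := by
    rcases lt_or_eq_of_le hτ00 with h | h
    · exact h
    · exfalso; apply hτ0out; rw [← h, hs0]; exact ⟨hy₁0, hy₂0⟩
  have hbefore : ∀ x, 0 ≤ x → x < τ₀ → s x ∈ Ioo (-z) y₂ := by
    intro x h0 hx
    by_contra hc
    have : τ₀ ≤ x := csInf_le hSbdd ⟨⟨h0, le_trans hx.le hτ0x₂⟩, hc⟩
    linarith
  have hboundR : s τ₀ ∈ Icc (-z) y₂ :=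
    lim_mem_Icc_right hτ0pos hs.continuousWithinAt (fun x h0 hx => hbefore x h0 hx)
  have hsτ0 : s τ₀ = -z ∨ s τ₀ = y₂ := by
    rcases lt_or_eq_of_le hboundR.1 with h1 | h1
    · rcases lt_or_eq_of_le hboundR.2 with h2 | h2
      · exact absurd ⟨h1, h2⟩ hτ0out
      · exact Or.inr h2
    · exact Or.inl h1.symm
  have hτ0eq : τ₀ = x₂ := by
    by_contra hne
    have hlt : τ₀ < x₂ := lt_of_le_of_ne hτ0x₂ hne
    have h := hfIoo τ₀ ⟨lt_trans hx₁0 hτ0pos, hlt⟩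
    rcases hsτ0 with hh | hh
    · rw [← hts τ₀, hh, hty₁] at h; exact lt_irrefl _ h.1
    · rw [← hts τ₀, hh, hty₂] at h; exact lt_irrefl _ h.2
  have hsx₂ : s x₂ = y₂ := by
    rcases hsτ0 with h | h
    · exfalso
      rw [hτ0eq] at h
      have h2 := hts x₂
      rw [h, hty₁] at h2
      linarith
    · rw [hτ0eq] at h; exact h
  have hsR : ∀ x, 0 ≤ x → x < x₂ → s x ∈ Ioo (-z) y₂ := by
    intro x h0 hx
    exact hbefore x h0 (by rwa [hτ0eq])
  -- left-side exit analysis for s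
  have hS'closed : IsClosed {x | x ∈ Icc x₁ (0:ℝ) ∧ s x ∉ Ioo (-z) y₂} := by
    have : {x | x ∈ Icc x₁ (0:ℝ) ∧ s x ∉ Ioo (-z) y₂} = Icc x₁ 0 ∩ s ⁻¹' (Ioo (-z) y₂)ᶜ := rfl
    rw [this]
    exact isClosed_Icc.inter (isOpen_Ioo.isClosed_compl.preimage hs)
  have hx₁S : x₁ ∈ {x | x ∈ Icc x₁ (0:ℝ) ∧ s x ∉ Ioo (-z) y₂} := by
    refine ⟨⟨le_rfl, hx₁0.le⟩, fun hmem => ?_⟩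
    have h := tIoo (s x₁) hmem.1 hmem.2
    rw [hts x₁] at h
    exact lt_irrefl _ h.1
  have hS'bdd : BddAbove {x | x ∈ Icc x₁ (0:ℝ) ∧ s x ∉ Ioo (-z) y₂} := ⟨0, fun y hy => hy.1.2⟩
  obtain ⟨⟨hσx₁, hσ0⟩, hσout⟩ := hS'closed.csSup_mem ⟨x₁, hx₁S⟩ hS'bdd
  set σ₀ := sSup {x | x ∈ Icc x₁ (0:ℝ) ∧ s x ∉ Ioo (-z) y₂} with hσ₀def
  have hσneg : σ₀ < 0 := by
    rcases lt_or_eq_of_le hσ0 with h | h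
    · exact h
    · exfalso; apply hσout; rw [h, hs0]; exact ⟨hy₁0, hy₂0⟩
  have hafter : ∀ x, σ₀ < x → x ≤ 0 → s x ∈ Ioo (-z) y₂ := by
    intro x hx h0
    by_contra hc
    have : x ≤ σ₀ := le_csSup hS'bdd ⟨⟨le_trans hσx₁ hx.le, h0⟩, hc⟩
    linarith
  have hboundL : s σ₀ ∈ Icc (-z) y₂ :=
    lim_mem_Icc_left hσneg hs.continuousWithinAt (fun x h1 h2 => hafter x h1 h2)
  have hsσ0 : s σ₀ = -z ∨ s σ₀ = y₂ := by
    rcases lt_or_eq_of_le hboundL.1 with h1 | h1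
    · rcases lt_or_eq_of_le hboundL.2 with h2 | h2
      · exact absurd ⟨h1, h2⟩ hσout
      · exact Or.inr h2
    · exact Or.inl h1.symm
  have hσeq : σ₀ = x₁ := by
    by_contra hne
    have hlt : x₁ < σ₀ := lt_of_le_of_ne hσx₁ (Ne.symm hne)
    have h := hfIoo σ₀ ⟨hlt, lt_trans hσneg hx₂0⟩
    rcases hsσ0 with hh | hh
    · rw [← hts σ₀, hh, hty₁] at h; exact lt_irrefl _ h.1
    · rw [← hts σ₀, hh, hty₂] at h; exact lt_irrefl _ h.2
  have hsx₁ : s x₁ = -z := by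
    rcases hsσ0 with h | h
    · rw [hσeq] at h; exact h
    · exfalso
      rw [hσeq] at h
      have h2 := hts x₁
      rw [h, hty₂] at h2
      linarith
  have hsL : ∀ x, x₁ < x → x ≤ 0 → s x ∈ Ioo (-z) y₂ := by
    intro x hx h0
    exact hafter x (by rwa [hσeq]) h0
  refine ⟨⟨hx₁m, hx₁0, hx₂0, hx₂1, ?_⟩, hsx₁, hsx₂⟩
  rw [hsx₁, hsx₂]
  apply Subset.antisymm
  · rintro v ⟨u, hu, rfl⟩
    rcases le_or_gt u 0 with h | h
    · exact hsL u hu.1 h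
    · exact hsR u h.le hu.2
  · intro v hv
    have hx₁x₂ : x₁ ≤ x₂ := by linarith
    obtain ⟨u, huIcc, hsu⟩ := intermediate_value_Icc hx₁x₂ hs.continuousOn
      (show v ∈ Icc (s x₁) (s x₂) from ⟨by rw [hsx₁]; exact hv.1.le, by rw [hsx₂]; exact hv.2.le⟩)
    refine ⟨u, ⟨?_, ?_⟩, hsu⟩
    · rcases lt_or_eq_of_le huIcc.1 with h | h
      · exact h
      · exfalso; rw [← h, hsx₁] at hsu; rw [← hsu] at hv; exact lt_irrefl _ hv.1
    · rcases lt_or_eq_of_le huIcc.2 with h | h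
      · exact h
      · exfalso; rw [h, hsx₂] at hsu; rw [← hsu] at hv; exact lt_irrefl _ hv.2

lemma posRD_of_negRD_neg {f : ℝ → ℝ} {x₁ x₂ : ℝ} (h : NegRD f x₁ x₂) :
    PosRD (fun x => -f x) x₁ x₂ := by
  refine ⟨h.1, h.2.1, h.2.2.1, h.2.2.2.1, ?_⟩
  show (fun x => -f x) '' Ioo x₁ x₂ = Ioo (-f x₁) (-f x₂)
  ext v
  simp only [mem_image, mem_Ioo]
  constructor
  · rintro ⟨u, hu, rfl⟩
    have h2 : f u ∈ Ioo (f x₂) (f x₁) := h.2.2.2.2 ▸ mem_image_of_mem f hu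
    simp only [mem_Ioo] at h2
    constructor <;> linarith [h2.1, h2.2]
  · rintro ⟨h1, h2⟩
    have hmem : -v ∈ Ioo (f x₂) (f x₁) := ⟨by linarith, by linarith⟩
    rw [← h.2.2.2.2] at hmem
    obtain ⟨u, hu, heq⟩ := hmem
    exact ⟨u, hu, by linarith⟩

lemma negRD_of_posRD_neg {t : ℝ → ℝ} {y₁ y₂ : ℝ} (h : PosRD (fun x => -t x) y₁ y₂) :
    NegRD t y₁ y₂ := by
  refine ⟨h.1, h.2.1, h.2.2.1, h.2.2.2.1, ?_⟩
  have he : (fun x => -t x) '' Ioo y₁ y₂ = Ioo (-t y₁) (-t y₂) := h.2.2.2.2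
  ext v
  simp only [mem_Ioo]
  constructor
  · rintro ⟨u, hu, rfl⟩
    have h2 : -t u ∈ Ioo (-t y₁) (-t y₂) := he ▸ ⟨u, hu, rfl⟩
    simp only [mem_Ioo] at h2
    constructor <;> linarith [h2.1, h2.2]
  · rintro ⟨h1, h2⟩
    have hmem : -v ∈ Ioo (-t y₁) (-t y₂) := ⟨by linarith, by linarith⟩
    rw [← he] at hmem
    obtain ⟨u, hu, heq⟩ := hmem
    have heq' : -t u = -v := heq
    exact ⟨u, hu, by linarith⟩

lemma posRD_of_negRD_neg' {t : ℝ → ℝ} {y₁ y₂ : ℝ} (h : NegRD (fun x => -t x) y₁ y₂) :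
    PosRD t y₁ y₂ := by
  refine ⟨h.1, h.2.1, h.2.2.1, h.2.2.2.1, ?_⟩
  have he : (fun x => -t x) '' Ioo y₁ y₂ = Ioo (-t y₂) (-t y₁) := h.2.2.2.2
  ext v
  simp only [mem_Ioo]
  constructor
  · rintro ⟨u, hu, rfl⟩
    have h2 : -t u ∈ Ioo (-t y₂) (-t y₁) := he ▸ ⟨u, hu, rfl⟩
    simp only [mem_Ioo] at h2
    constructor <;> linarith [h2.1, h2.2]
  · rintro ⟨h1, h2⟩
    have hmem : -v ∈ Ioo (-t y₂) (-t y₁) := ⟨by linarith, by linarith⟩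
    rw [← he] at hmem
    obtain ⟨u, hu, heq⟩ := hmem
    have heq' : -t u = -v := heq
    exact ⟨u, hu, by linarith⟩

theorem stmt14 (f t : ℝ → ℝ) (hpl : PiecewiseLinear f) (hf0 : f 0 = 0)
    (hnc : NonConstSides f)
    (ht : IsRadialContourFactor f t)
    (x₁ x₂ : ℝ) (hrd : RadialDeparture f x₁ x₂) :
    ∃ y₁ y₂, RadialDeparture t y₁ y₂ ∧
      ∀ s : ℝ → ℝ, Continuous s → s 0 = 0 → f = t ∘ s →
        PosRD s x₁ x₂ ∧ s x₁ = y₁ ∧ s x₂ = y₂ := by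
  have hfc : ContinuousOn f (Icc (-1) 1) := by
    obtain ⟨n, c, hc0, hcn, hm, hl⟩ := hpl
    have := pieces_continuousOn n hm hl
    rwa [hc0, hcn] at this
  rcases hrd with hp | hneg
  · exact main_pos hfc hf0 ht.1 ht.2 hp
  · have hfc' : ContinuousOn (fun x => -f x) (Icc (-1) 1) := hfc.neg
    have hf0' : (fun x => -f x) 0 = 0 := by simp [hf0]
    have htR' : IsContourFactor (fun x => -f x) (fun x => -t x) := isContourFactor_neg ht.1
    have htL' : IsContourFactor (fun x => (fun y => -f y) (-x)) (fun x => (fun y => -t y) (-x)) :=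
      isContourFactor_neg ht.2
    have hp' : PosRD (fun x => -f x) x₁ x₂ := posRD_of_negRD_neg hneg
    obtain ⟨y₁, y₂, hRD', hall⟩ := main_pos hfc' hf0' htR' htL' hp'
    refine ⟨y₁, y₂, ?_, ?_⟩
    · rcases hRD' with h | h
      · exact Or.inr (negRD_of_posRD_neg h)
      · exact Or.inl (posRD_of_negRD_neg' h)
    · intro s hs hs0 hfs
      have hcompose : (fun x => -f x) = (fun x => -t x) ∘ s := by
        funext x
        simp [congrFun hfs x]
      exact hall s hs hs0 hcompose
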